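/- The ℂ-linear map C¹ → z^{-1}ℂ[z^{-1}], F ↦ sing(∫₀¹F), is surjective and its kernel is exactly d(C⁰). Hence it induces a ℂ-linear isomorphism H¹(ℂ{{z}}) = C¹/d(C⁰) ≅ z^{-1}ℂ[z^{-1}], where z^{-1}ℂ[z^{-1}] denotes the space of Laurent series supported in strictly negative powers of z. -/

import Mathlib

/-!
`H¹(ℂ{{z}}) ≅ z⁻¹ℂ[z⁻¹]`: the map `C¹ → z⁻¹ℂ[z⁻¹]`, `F ↦ sing(∫₀¹ F)`, is surjective
with kernel exactly `d(C⁰)`.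
-/

noncomputable section

open Polynomial

/-- Membership in `ℂ[[z]] ⊆ ℂ((z))`: all coefficients in strictly negative degrees vanish. -/
def inP (x : LaurentSeries ℂ) : Prop := ∀ n : ℤ, n < 0 → x.coeff n = 0

/-- Membership in `z⁻¹ℂ[z⁻¹] ⊆ ℂ((z))`: supported in strictly negative degrees. -/
def inQ (x : LaurentSeries ℂ) : Prop := ∀ n : ℤ, 0 ≤ n → x.coeff n = 0

/-- `∫₀¹ F` for `F = Σ_k F_k v^k`, namely `Σ_k F_k / (k+1)`. -/
def intg (F : Polynomial (LaurentSeries ℂ)) : LaurentSeries ℂ :=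
  ∑ k ∈ Finset.range (F.natDegree + 1), F.coeff k / ((k : LaurentSeries ℂ) + 1)

/-- The projection of a Laurent series onto its part supported in strictly
negative powers of `z`. -/
def sing (x : LaurentSeries ℂ) : LaurentSeries ℂ :=
  ⟨fun n => if n < 0 then x.coeff n else 0, by
    apply x.isPWO_support'.mono
    intro n hn
    simp only [Function.mem_support, ne_eq] at hn ⊢
    intro h
    apply hn
    split <;> simp [h]⟩

instance : CharZero (LaurentSeries ℂ) :=
  ⟨fun m n h => Nat.cast_injective (R := ℂ) (HahnSeries.C_injective (Γ := ℤ) (by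
    rwa [map_natCast, map_natCast]))⟩

lemma sing_coeff (x : LaurentSeries ℂ) (n : ℤ) :
    (sing x).coeff n = if n < 0 then x.coeff n else 0 := rfl

lemma sing_eq_zero_iff (x : LaurentSeries ℂ) : sing x = 0 ↔ inP x := by
  constructor
  · intro h n hn
    have := congrArg (fun y : LaurentSeries ℂ => y.coeff n) h
    simpa [sing_coeff, hn] using this
  · intro h
    ext n
    simp only [sing_coeff, HahnSeries.coeff_zero]
    split
    · exact h n (by assumption)
    · rfl

lemma sing_eq_self (x : LaurentSeries ℂ) (h : inQ x) : sing x = x := by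
  ext n
  simp only [sing_coeff]
  split
  · rfl
  · exact (h n (by omega)).symm

lemma intg_eq_sum (F : Polynomial (LaurentSeries ℂ)) (N : ℕ) (h : F.natDegree < N) :
    intg F = ∑ k ∈ Finset.range N, F.coeff k / ((k : LaurentSeries ℂ) + 1) := by
  rw [intg]
  refine Finset.sum_subset (by intro k hk; simp only [Finset.mem_range] at *; omega) ?_
  intro k hk hk'
  simp only [Finset.mem_range, not_lt] at hk'
  rw [F.coeff_eq_zero_of_natDegree_lt (by omega), zero_div]

lemma intg_derivative (f : Polynomial (LaurentSeries ℂ)) :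
    intg (derivative f) = f.eval 1 - f.eval 0 := by
  have h1 : intg (derivative f) =
      ∑ k ∈ Finset.range (f.natDegree + 1), f.coeff (k + 1) := by
    rw [intg_eq_sum (derivative f) (f.natDegree + 1)
      (Nat.lt_succ_of_le ((f.natDegree_derivative_le).trans (Nat.sub_le _ _)))]
    refine Finset.sum_congr rfl fun k _ => ?_
    have hk : ((k : LaurentSeries ℂ) + 1) ≠ 0 := Nat.cast_add_one_ne_zero k
    rw [coeff_derivative, mul_div_assoc, div_self hk, mul_one]
  have h2 : f.eval 1 = ∑ k ∈ Finset.range (f.natDegree + 1 + 1), f.coeff k := by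
    rw [eval_eq_sum_range' (Nat.lt_succ_of_le (Nat.le_succ _))]
    simp
  rw [h1, h2, Finset.sum_range_succ' (fun k => f.coeff k) (f.natDegree + 1),
    ← coeff_zero_eq_eval_zero]
  ring

/-- The map `C¹ → z⁻¹ℂ[z⁻¹]`, `F ↦ sing(∫₀¹F)`, takes values in `z⁻¹ℂ[z⁻¹]`, is
surjective onto it, and its kernel is exactly `d(C⁰)`; hence it induces an isomorphism
`H¹(ℂ{{z}}) = C¹/d(C⁰) ≅ z⁻¹ℂ[z⁻¹]`. -/
theorem raviolo_H1 :
    (∀ F : Polynomial (LaurentSeries ℂ), inQ (sing (intg F)))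
    ∧ (∀ q : LaurentSeries ℂ, inQ q → ∃ F : Polynomial (LaurentSeries ℂ),
        sing (intg F) = q)
    ∧ (∀ F : Polynomial (LaurentSeries ℂ),
        sing (intg F) = 0 ↔
        ∃ f : Polynomial (LaurentSeries ℂ),
          inP (f.eval 0) ∧ inP (f.eval 1) ∧ F = derivative f) := by
  refine ⟨?_, ?_, ?_⟩
  · intro F n hn
    simp [sing_coeff, not_lt.mpr hn]
  · intro q hq
    refine ⟨C q, ?_⟩
    have : intg (C q) = q := by
      rw [intg]
      simp [natDegree_C]
    rw [this, sing_eq_self q hq]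
  · intro F
    constructor
    · intro h
      set f : Polynomial (LaurentSeries ℂ) :=
        ∑ k ∈ Finset.range (F.natDegree + 1),
          C (F.coeff k / ((k : LaurentSeries ℂ) + 1)) * X ^ (k + 1) with hf
      have hder : derivative f = F := by
        rw [hf, map_sum]
        conv_rhs => rw [F.as_sum_range' (F.natDegree + 1) (Nat.lt_succ_self _)]
        refine Finset.sum_congr rfl fun k _ => ?_
        rw [derivative_C_mul_X_pow, Nat.add_sub_cancel, ← C_mul_X_pow_eq_monomial]
        congr 1
        push_cast
        have hk : ((k : LaurentSeries ℂ) + 1) ≠ 0 := Nat.cast_add_one_ne_zero k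
        rw [div_mul_cancel₀ _ hk]
      have he0 : f.eval 0 = 0 := by
        rw [hf]
        simp [eval_finset_sum]
      have he1 : f.eval 1 = intg F := by
        rw [hf, intg]
        simp [eval_finset_sum]
      refine ⟨f, ?_, ?_, hder.symm⟩
      · rw [he0]; intro n _; simp
      · rw [he1]; exact (sing_eq_zero_iff _).mp h
    · rintro ⟨f, h0, h1, rfl⟩
      rw [sing_eq_zero_iff, intg_derivative]
      intro n hn
      simp [HahnSeries.coeff_sub, h0 n hn, h1 n hn]


end
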